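/- arXiv:1311.2445 — 2 statements merged into one kernel-verified Lean document; each statement's English description precedes it below -/
import Mathlib

section
/- There exist real numbers γ*_j (for j ≠ i), each lying in the closed interval with endpoints r̃_{j,(i)} and r̃_{j,(i)} − Xⱼᵀηᵢ, such that ‖β̂ − β̃ᵢ‖ ≤ (1/τ)·‖𝓡ᵢ‖, where 𝓡ᵢ = (1/n) Σ_{j≠i} [ψ'(γ*_j) − ψ'(r̃_{j,(i)})] Xⱼ Xⱼᵀ ηᵢ. (Indeed f(β̃ᵢ) = 𝓡ᵢ.) -/
noncomputable section

open scoped BigOperators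
open scoped Matrix

/-- View a plain vector as an element of Euclidean space. -/
def toE {p : ℕ} (v : Fin p → ℝ) : EuclideanSpace ℝ (Fin p) := WithLp.toLp 2 v

/-- Residual `ε j - Xⱼᵀβ`. -/
def resid {p n : ℕ} (X : Fin n → EuclideanSpace ℝ (Fin p)) (ε : Fin n → ℝ)
    (β : EuclideanSpace ℝ (Fin p)) (j : Fin n) : ℝ :=
  ε j - ∑ k, X j k * β k

/-- The gradient-type map `f(β) = -(1/n) Σᵢ Xᵢ ψ(εᵢ - Xᵢᵀβ) + τβ`, with `ψ = ρ'`. -/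
def fgrad {p n : ℕ} (ρ : ℝ → ℝ) (τ : ℝ) (X : Fin n → EuclideanSpace ℝ (Fin p))
    (ε : Fin n → ℝ) (β : EuclideanSpace ℝ (Fin p)) : EuclideanSpace ℝ (Fin p) :=
  τ • β - (1 / (n : ℝ)) • ∑ j, deriv ρ (resid X ε β j) • X j

/-- The leave-one-out gradient map `fᵢ(β) = -(1/n) Σ_{j≠i} Xⱼ ψ(εⱼ - Xⱼᵀβ) + τβ`. -/
def fgradLOO {p n : ℕ} (ρ : ℝ → ℝ) (τ : ℝ) (X : Fin n → EuclideanSpace ℝ (Fin p))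
    (ε : Fin n → ℝ) (i : Fin n) (β : EuclideanSpace ℝ (Fin p)) :
    EuclideanSpace ℝ (Fin p) :=
  τ • β - (1 / (n : ℝ)) • ∑ j ∈ Finset.univ.erase i, deriv ρ (resid X ε β j) • X j

/-- `Sᵢ = (1/n) Σ_{j≠i} ψ'(r̃_{j,(i)}) Xⱼ Xⱼᵀ`, where `r̃_{j,(i)}` is the leave-one-out
residual computed from `βi = β̂_{(i)}`. -/
def Smat {p n : ℕ} (ρ : ℝ → ℝ) (X : Fin n → EuclideanSpace ℝ (Fin p)) (ε : Fin n → ℝ)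
    (i : Fin n) (βi : EuclideanSpace ℝ (Fin p)) : Matrix (Fin p) (Fin p) ℝ :=
  (1 / (n : ℝ)) • ∑ j ∈ Finset.univ.erase i,
    deriv (deriv ρ) (resid X ε βi j) • Matrix.vecMulVec (fun k => X j k) (fun k => X j k)

/-- `cᵢ = (1/n) Xᵢᵀ (Sᵢ + τ Id)⁻¹ Xᵢ`. -/
def cval {p n : ℕ} (ρ : ℝ → ℝ) (τ : ℝ) (X : Fin n → EuclideanSpace ℝ (Fin p))
    (ε : Fin n → ℝ) (i : Fin n) (βi : EuclideanSpace ℝ (Fin p)) : ℝ :=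
  (1 / (n : ℝ)) * ∑ k, X i k *
    ((Smat ρ X ε i βi + τ • (1 : Matrix (Fin p) (Fin p) ℝ))⁻¹.mulVec (fun l => X i l)) k

/-- `ηᵢ = (1/n)(Sᵢ + τ Id)⁻¹ Xᵢ ψ(pr)`, where `pr = prox_{cᵢ}(ρ)(r̃_{i,(i)})`. -/
def etaVec {p n : ℕ} (ρ : ℝ → ℝ) (τ : ℝ) (X : Fin n → EuclideanSpace ℝ (Fin p))
    (ε : Fin n → ℝ) (i : Fin n) (βi : EuclideanSpace ℝ (Fin p)) (pr : ℝ) :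
    EuclideanSpace ℝ (Fin p) :=
  ((1 / (n : ℝ)) * deriv ρ pr) •
    toE ((Smat ρ X ε i βi + τ • (1 : Matrix (Fin p) (Fin p) ℝ))⁻¹.mulVec (fun l => X i l))

lemma euclid_sum_apply {p n : ℕ} (s : Finset (Fin n)) (f : Fin n → EuclideanSpace ℝ (Fin p))
    (k : Fin p) : (∑ j ∈ s, f j) k = ∑ j ∈ s, f j k := by
  classical
  induction s using Finset.induction with
  | empty => rfl
  | insert a s h ih => rw [Finset.sum_insert h, Finset.sum_insert h, PiLp.add_apply, ih]

/-- Mean value theorem, all endpoints version. -/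
lemma mvt_uIcc (f : ℝ → ℝ) (hf : Differentiable ℝ f) (a b : ℝ) :
    ∃ c ∈ Set.uIcc a b, f b - f a = deriv f c * (b - a) := by
  rcases lt_trichotomy a b with h | h | h
  · obtain ⟨c, hc, hc'⟩ := exists_deriv_eq_slope f h hf.continuous.continuousOn
      (fun x _ => (hf.differentiableAt).differentiableWithinAt)
    refine ⟨c, ?_, ?_⟩
    · rw [Set.uIcc_of_le h.le]; exact Set.Ioo_subset_Icc_self hc
    · rw [hc']; exact (div_mul_cancel₀ _ (sub_ne_zero.2 (ne_of_gt h))).symm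
  · exact ⟨a, Set.left_mem_uIcc, by subst h; ring⟩
  · obtain ⟨c, hc, hc'⟩ := exists_deriv_eq_slope f h hf.continuous.continuousOn
      (fun x _ => (hf.differentiableAt).differentiableWithinAt)
    refine ⟨c, ?_, ?_⟩
    · rw [Set.uIcc_comm, Set.uIcc_of_le h.le]; exact Set.Ioo_subset_Icc_self hc
    · have hne : a - b ≠ 0 := sub_ne_zero.2 (ne_of_gt h)
      rw [hc']
      field_simp
      ring

/-- The derivative of a monotone differentiable function is nonnegative. -/
lemma deriv_nonneg_of_monotone {f : ℝ → ℝ} (hm : Monotone f) (hd : Differentiable ℝ f)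
    (x : ℝ) : 0 ≤ deriv f x := by
  have h := (hd x).hasDerivAt
  rw [hasDerivAt_iff_tendsto_slope] at h
  have h2 : Filter.Tendsto (slope f x) (nhdsWithin x (Set.Ioi x)) (nhds (deriv f x)) :=
    h.mono_left (nhdsWithin_mono x (fun y hy => ne_of_gt hy))
  refine ge_of_tendsto h2 ?_
  filter_upwards [self_mem_nhdsWithin] with y hy
  rw [slope_def_field]
  exact div_nonneg (sub_nonneg.2 (hm (le_of_lt hy))) (sub_nonneg.2 (le_of_lt hy))

lemma posSemidef_smul_aux {m : Type*} [Fintype m] {A : Matrix m m ℝ} (hA : A.PosSemidef) {c : ℝ}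
    (hc : 0 ≤ c) : (c • A).PosSemidef := by
  refine ⟨?_, fun x => ?_⟩
  · have h1 : (c • A)ᴴ = star c • Aᴴ := Matrix.conjTranspose_smul c A
    rw [Matrix.IsHermitian, h1, star_trivial, hA.1]
  · have h := hA.2 x
    simp only [Finsupp.sum, Matrix.smul_apply, smul_eq_mul] at h ⊢
    have e : ∀ a b : m, star (x a) * (c * A a b) * x b = c * (star (x a) * A a b * x b) :=
      fun a b => by ring
    simp only [e, ← Finset.mul_sum]
    exact mul_nonneg hc h

lemma posSemidef_vecMulVec_aux {m : Type*} [Fintype m] (v : m → ℝ) :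
    (Matrix.vecMulVec v v).PosSemidef := by
  have h : Matrix.vecMulVec v v = (Matrix.replicateRow Unit v)ᴴ * Matrix.replicateRow Unit v := by
    ext k l
    simp [Matrix.vecMulVec_apply, Matrix.mul_apply, Matrix.conjTranspose_apply]
  rw [h]
  exact Matrix.posSemidef_conjTranspose_mul_self _

/-- Matrices of the form `c • Σ aⱼ vⱼvⱼᵀ + τ I` with `c, aⱼ ≥ 0`, `τ > 0` are invertible. -/
lemma det_isUnit_aux {p n : ℕ} (τ : ℝ) (hτ : 0 < τ) (c : ℝ) (hc : 0 ≤ c)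
    (s : Finset (Fin n)) (a : Fin n → ℝ) (ha : ∀ j ∈ s, 0 ≤ a j) (v : Fin n → Fin p → ℝ) :
    IsUnit ((c • ∑ j ∈ s, a j • Matrix.vecMulVec (v j) (v j)
      + τ • (1 : Matrix (Fin p) (Fin p) ℝ)).det) := by
  have hsum : (∑ j ∈ s, a j • Matrix.vecMulVec (v j) (v j)).PosSemidef :=
    Finset.sum_induction _ _ (fun A B hA hB => hA.add hB) Matrix.PosSemidef.zero
      (fun j hj => posSemidef_smul_aux (posSemidef_vecMulVec_aux (v j)) (ha j hj))
  have h1 : (c • ∑ j ∈ s, a j • Matrix.vecMulVec (v j) (v j)).PosSemidef :=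
    posSemidef_smul_aux hsum hc
  have h2 : (τ • (1 : Matrix (Fin p) (Fin p) ℝ)).PosDef := by
    rw [Matrix.smul_one_eq_diagonal]
    exact Matrix.posDef_diagonal_iff.mpr fun _ => hτ
  exact isUnit_iff_ne_zero.mpr (Matrix.PosDef.det_pos (Matrix.PosDef.posSemidef_add h1 h2)).ne'

theorem statement4 {p n : ℕ} (ρ : ℝ → ℝ) (τ : ℝ) (hτ : 0 < τ)
    (hρconv : ConvexOn ℝ Set.univ ρ) (hρsmooth : ContDiff ℝ 2 ρ)
    (hρnonneg : ∀ x, 0 ≤ ρ x) (hρzero : ρ 0 = 0)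
    (hsgn : ∀ x : ℝ, x ≠ 0 → Real.sign (deriv ρ x) = Real.sign x)
    (X : Fin n → EuclideanSpace ℝ (Fin p)) (ε : Fin n → ℝ) (i : Fin n)
    (βhat βi : EuclideanSpace ℝ (Fin p))
    (hβhat : fgrad ρ τ X ε βhat = 0)
    (hβi : fgradLOO ρ τ X ε i βi = 0)
    -- `pr` is the prox value: the unique `y` with `y + cᵢ ψ(y) = r̃_{i,(i)}`
    (pr : ℝ)
    (hpr : pr + cval ρ τ X ε i βi * deriv ρ pr = resid X ε βi i) :
    ∃ γ : Fin n → ℝ,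
      (∀ j, j ≠ i → γ j ∈ Set.uIcc (resid X ε βi j)
          (resid X ε βi j - ∑ k, X j k * etaVec ρ τ X ε i βi pr k)) ∧
      ‖βhat - (βi + etaVec ρ τ X ε i βi pr)‖ ≤ (1 / τ) *
        ‖(1 / (n : ℝ)) • ∑ j ∈ Finset.univ.erase i,
            ((deriv (deriv ρ) (γ j) - deriv (deriv ρ) (resid X ε βi j)) *
              (∑ k, X j k * etaVec ρ τ X ε i βi pr k)) • X j‖ := by
  classical
  set η : EuclideanSpace ℝ (Fin p) := etaVec ρ τ X ε i βi pr with hη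
  -- basic differentiability facts
  have hdρ : Differentiable ℝ ρ := hρsmooth.differentiable (by norm_num)
  have hdψ : Differentiable ℝ (deriv ρ) := by
    have h2 : ContDiff ℝ (1 + 1) ρ := by exact_mod_cast hρsmooth
    exact (contDiff_succ_iff_deriv.mp h2).2.2.differentiable one_ne_zero
  have hmono : Monotone (deriv ρ) :=
    monotoneOn_univ.mp (hρconv.monotoneOn_deriv (fun x _ => hdρ.differentiableAt))
  have hψ'nonneg : ∀ x, 0 ≤ deriv (deriv ρ) x := fun x =>
    deriv_nonneg_of_monotone hmono hdψ x
  -- the matrix M and its inverse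
  set M : Matrix (Fin p) (Fin p) ℝ := Smat ρ X ε i βi + τ • 1 with hM
  have hMunit : IsUnit M.det := by
    rw [hM]
    unfold Smat
    exact det_isUnit_aux τ hτ (1/(n:ℝ)) (by positivity) (Finset.univ.erase i)
      (fun j => deriv (deriv ρ) (resid X ε βi j)) (fun j _ => hψ'nonneg _)
      (fun j k => X j k)
  have hMinv : ∀ y : Fin p → ℝ, M.mulVec (M⁻¹.mulVec y) = y := by
    intro y
    rw [Matrix.mulVec_mulVec, Matrix.mul_nonsing_inv _ hMunit, Matrix.one_mulVec]
  have hηdef : ∀ k, η k = ((1/(n:ℝ)) * deriv ρ pr) * (M⁻¹.mulVec (fun l => X i l)) k := by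
    intro k
    rw [hη, hM]
    rfl
  -- expansion of Smat.mulVec
  have hSmul : ∀ (x : Fin p → ℝ) (k : Fin p), (Smat ρ X ε i βi).mulVec x k
      = (1/(n:ℝ)) * ∑ j ∈ Finset.univ.erase i,
          deriv (deriv ρ) (resid X ε βi j) * (∑ l, X j l * x l) * X j k := by
    intro x k
    rw [Smat, Matrix.smul_mulVec]
    simp only [Pi.smul_apply, smul_eq_mul]
    congr 1
    simp only [Matrix.mulVec, dotProduct, Matrix.sum_apply, Matrix.smul_apply,
      Matrix.vecMulVec_apply, smul_eq_mul, Finset.sum_mul, Finset.mul_sum]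
    rw [Finset.sum_comm]
    exact Finset.sum_congr rfl fun j _ => Finset.sum_congr rfl fun l _ => by ring
  -- key matrix identity (A)
  have hA : ∀ k : Fin p, τ * η k + (1/(n:ℝ)) * ∑ j ∈ Finset.univ.erase i,
        deriv (deriv ρ) (resid X ε βi j) * (∑ l, X j l * η l) * X j k
      = (1/(n:ℝ)) * deriv ρ pr * X i k := by
    have hv : (fun k => η k) = ((1/(n:ℝ)) * deriv ρ pr) • (M⁻¹.mulVec (fun l => X i l)) := by
      funext k
      rw [hηdef k]
      rfl
    have h1 : M.mulVec (fun k => η k) = fun k => (1/(n:ℝ)) * deriv ρ pr * X i k := by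
      rw [hv, Matrix.mulVec_smul, hMinv]
      funext k
      simp [smul_eq_mul]
    intro k
    have h2 := congrFun h1 k
    rw [hM, Matrix.add_mulVec, Matrix.smul_mulVec, Matrix.one_mulVec] at h2
    have h3 : ((Smat ρ X ε i βi).mulVec (fun k => η k) + τ • fun k => η k) k
        = (Smat ρ X ε i βi).mulVec (fun k => η k) k + τ * η k := by
      simp [smul_eq_mul]
    rw [h3, hSmul] at h2
    linarith [h2]
  -- leave-one-out first-order condition (B)
  have hB : ∀ k : Fin p, τ * βi k
      = (1/(n:ℝ)) * ∑ j ∈ Finset.univ.erase i, deriv ρ (resid X ε βi j) * X j k := by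
    intro k
    have h0 : τ • βi - (1 / (n : ℝ)) • ∑ j ∈ Finset.univ.erase i,
        deriv ρ (resid X ε βi j) • X j = 0 := hβi
    have h1 := congrArg (fun v => v k) (sub_eq_zero.mp h0)
    simpa [PiLp.smul_apply, euclid_sum_apply, smul_eq_mul, Finset.mul_sum] using h1
  -- prox identity (C)
  have hti : (∑ k, X i k * η k) = cval ρ τ X ε i βi * deriv ρ pr := by
    have hc : cval ρ τ X ε i βi
        = (1/(n:ℝ)) * ∑ k, X i k * (M⁻¹.mulVec (fun l => X i l)) k := by
      unfold cval
      rw [← hM]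
    rw [hc, Finset.mul_sum, Finset.sum_mul]
    refine Finset.sum_congr rfl fun k _ => ?_
    rw [hηdef k]
    ring
  have hri : resid X ε βi i - (∑ k, X i k * η k) = pr := by
    rw [hti]; linarith [hpr]
  -- mean value theorem choices
  have hmvtj : ∀ j, ∃ c ∈ Set.uIcc (resid X ε βi j) (resid X ε βi j - ∑ k, X j k * η k),
      deriv ρ (resid X ε βi j - ∑ k, X j k * η k) - deriv ρ (resid X ε βi j)
        = deriv (deriv ρ) c * ((resid X ε βi j - ∑ k, X j k * η k) - resid X ε βi j) :=
    fun j => mvt_uIcc (deriv ρ) hdψ _ _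
  choose γ hγmem hγeq using hmvtj
  refine ⟨γ, fun j _ => hγmem j, ?_⟩
  set R : EuclideanSpace ℝ (Fin p) := (1/(n:ℝ)) • ∑ j ∈ Finset.univ.erase i,
      ((deriv (deriv ρ) (γ j) - deriv (deriv ρ) (resid X ε βi j)) *
        (∑ k, X j k * η k)) • X j with hR
  -- residuals at βi + η
  have hresid : ∀ j, resid X ε (βi + η) j = resid X ε βi j - ∑ k, X j k * η k := by
    intro j
    simp only [resid, PiLp.add_apply, mul_add, Finset.sum_add_distrib]
    ring
  -- the remainder identity: f(βi + η) = R
  have hfR : fgrad ρ τ X ε (βi + η) = R := by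
    ext k
    have hgk : fgrad ρ τ X ε (βi + η) k = τ * (βi k + η k)
        - (1/(n:ℝ)) * ∑ j, deriv ρ (resid X ε (βi + η) j) * X j k := by
      simp only [fgrad, PiLp.sub_apply, PiLp.smul_apply, PiLp.add_apply, euclid_sum_apply,
        smul_eq_mul]
    rw [hgk]
    rw [show (∑ j, deriv ρ (resid X ε (βi + η) j) * X j k)
        = deriv ρ (resid X ε (βi + η) i) * X i k
          + ∑ j ∈ Finset.univ.erase i, deriv ρ (resid X ε (βi + η) j) * X j k from
      (Finset.add_sum_erase _ _ (Finset.mem_univ i)).symm]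
    simp only [hresid]
    rw [hri]
    have hRk : R k = (1/(n:ℝ)) * ∑ j ∈ Finset.univ.erase i,
        ((deriv (deriv ρ) (γ j) - deriv (deriv ρ) (resid X ε βi j)) *
          (∑ k', X j k' * η k')) * X j k := by
      rw [hR]
      simp only [PiLp.smul_apply, euclid_sum_apply, smul_eq_mul]
    rw [hRk]
    have e1 : ∑ j ∈ Finset.univ.erase i,
          deriv ρ (resid X ε βi j - ∑ k', X j k' * η k') * X j k
        = (∑ j ∈ Finset.univ.erase i, deriv ρ (resid X ε βi j) * X j k)
          - ∑ j ∈ Finset.univ.erase i,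
              deriv (deriv ρ) (γ j) * (∑ l, X j l * η l) * X j k := by
      rw [← Finset.sum_sub_distrib]
      refine Finset.sum_congr rfl fun j _ => ?_
      linear_combination (X j k) * hγeq j
    have e3 : ∑ j ∈ Finset.univ.erase i,
          ((deriv (deriv ρ) (γ j) - deriv (deriv ρ) (resid X ε βi j)) *
            (∑ k', X j k' * η k')) * X j k
        = (∑ j ∈ Finset.univ.erase i,
              deriv (deriv ρ) (γ j) * (∑ l, X j l * η l) * X j k)
          - ∑ j ∈ Finset.univ.erase i,
              deriv (deriv ρ) (resid X ε βi j) * (∑ l, X j l * η l) * X j k := by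
      rw [← Finset.sum_sub_distrib]
      exact Finset.sum_congr rfl fun j _ => by ring
    rw [e1, e3]
    linear_combination hB k + hA k
  -- strong monotonicity
  have key : ∀ b1 b2 : EuclideanSpace ℝ (Fin p),
      τ * ‖b1 - b2‖^2 ≤ inner ℝ (fgrad ρ τ X ε b1 - fgrad ρ τ X ε b2) (b1 - b2) := by
    intro b1 b2
    have hXd : ∀ j, (∑ k, X j k * (b1 k - b2 k)) = resid X ε b2 j - resid X ε b1 j := by
      intro j
      simp only [resid, mul_sub, Finset.sum_sub_distrib]
      ring
    have hinner : (inner ℝ (fgrad ρ τ X ε b1 - fgrad ρ τ X ε b2) (b1 - b2) : ℝ)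
        = τ * (∑ k, (b1 k - b2 k) * (b1 k - b2 k))
          + (1/(n:ℝ)) * ∑ j, (deriv ρ (resid X ε b1 j) - deriv ρ (resid X ε b2 j))
              * (resid X ε b1 j - resid X ε b2 j) := by
      calc (inner ℝ (fgrad ρ τ X ε b1 - fgrad ρ τ X ε b2) (b1 - b2) : ℝ)
          = ∑ k, ((τ * b1 k - (1/(n:ℝ)) * ∑ j, deriv ρ (resid X ε b1 j) * X j k)
              - (τ * b2 k - (1/(n:ℝ)) * ∑ j, deriv ρ (resid X ε b2 j) * X j k))
                * (b1 k - b2 k) := by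
            rw [PiLp.inner_apply]
            refine Finset.sum_congr rfl fun k _ => ?_
            simp [fgrad, PiLp.sub_apply, PiLp.smul_apply, euclid_sum_apply, smul_eq_mul,
              RCLike.inner_apply, conj_trivial]
            ring
        _ = (∑ k, τ * ((b1 k - b2 k) * (b1 k - b2 k)))
            + ∑ k, (1/(n:ℝ)) * ∑ j, (deriv ρ (resid X ε b2 j) - deriv ρ (resid X ε b1 j))
                * (X j k * (b1 k - b2 k)) := by
            rw [← Finset.sum_add_distrib]
            refine Finset.sum_congr rfl fun k _ => ?_
            have e : ∑ j, (deriv ρ (resid X ε b2 j) - deriv ρ (resid X ε b1 j))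
                  * (X j k * (b1 k - b2 k))
                = ((∑ j, deriv ρ (resid X ε b2 j) * X j k)
                    - ∑ j, deriv ρ (resid X ε b1 j) * X j k) * (b1 k - b2 k) := by
              rw [← Finset.sum_sub_distrib, Finset.sum_mul]
              exact Finset.sum_congr rfl fun j _ => by ring
            rw [e]
            ring
        _ = τ * (∑ k, (b1 k - b2 k) * (b1 k - b2 k))
            + (1/(n:ℝ)) * ∑ j, (deriv ρ (resid X ε b1 j) - deriv ρ (resid X ε b2 j))
                * (resid X ε b1 j - resid X ε b2 j) := by
            rw [← Finset.mul_sum, ← Finset.mul_sum]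
            congr 1
            rw [Finset.sum_comm]
            congr 1
            refine Finset.sum_congr rfl fun j _ => ?_
            rw [← Finset.mul_sum, hXd j]
            ring
    have hnorm : ∑ k, (b1 k - b2 k) * (b1 k - b2 k) = ‖b1 - b2‖^2 := by
      rw [← real_inner_self_eq_norm_sq]
      rw [PiLp.inner_apply]
      refine Finset.sum_congr rfl fun k _ => ?_
      simp [RCLike.inner_apply, conj_trivial, PiLp.sub_apply]
      ring
    have hterm : ∀ j, 0 ≤ (deriv ρ (resid X ε b1 j) - deriv ρ (resid X ε b2 j))
        * (resid X ε b1 j - resid X ε b2 j) := by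
      intro j
      rcases le_total (resid X ε b1 j) (resid X ε b2 j) with h | h
      · nlinarith [sub_nonpos.2 (hmono h), sub_nonpos.2 h]
      · exact mul_nonneg (sub_nonneg.2 (hmono h)) (sub_nonneg.2 h)
    rw [hinner, ← hnorm]
    have h0 : (0:ℝ) ≤ (1/(n:ℝ)) * ∑ j, (deriv ρ (resid X ε b1 j) - deriv ρ (resid X ε b2 j))
        * (resid X ε b1 j - resid X ε b2 j) :=
      mul_nonneg (by positivity) (Finset.sum_nonneg fun j _ => hterm j)
    linarith
  have hfd : fgrad ρ τ X ε βhat - fgrad ρ τ X ε (βi + η) = -R := by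
    rw [hβhat, hfR, zero_sub]
  have h1 := key βhat (βi + η)
  rw [hfd] at h1
  have h2 : (inner ℝ (-R) (βhat - (βi + η)) : ℝ) ≤ ‖R‖ * ‖βhat - (βi + η)‖ := by
    have := real_inner_le_norm (-R) (βhat - (βi + η))
    simpa [norm_neg] using this
  have h3 : τ * ‖βhat - (βi + η)‖^2 ≤ ‖R‖ * ‖βhat - (βi + η)‖ := le_trans h1 h2
  rcases eq_or_lt_of_le (norm_nonneg (βhat - (βi + η))) with h4 | h4
  · rw [← h4]
    positivity
  · have h5 : τ * ‖βhat - (βi + η)‖ ≤ ‖R‖ := by nlinarith [h3, h4]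
    rw [show (1/τ) * ‖R‖ = ‖R‖ / τ by ring, le_div_iff₀ hτ]
    linarith [h5]
end
end

section
/- Let Rᵢ = εᵢ − Xᵢᵀβ̂ be the i-th residual of the full problem and r̃_{i,(i)} = εᵢ − Xᵢᵀβ̂_{(i)} the i-th leave-one-out residual. Then the deterministic bounds |r̃_{i,(i)} − Rᵢ| ≤ (‖Xᵢ‖²/n)·(1/τ)·|ψ(r̃_{i,(i)})| and hence |Rᵢ| ≤ |r̃_{i,(i)}| + (‖Xᵢ‖²/n)·(1/τ)·|ψ(r̃_{i,(i)})| hold. -/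
noncomputable section

open scoped BigOperators

set_option maxHeartbeats 2000000 in
open scoped RealInnerProductSpace in
theorem statement6 {p n : ℕ} (ρ : ℝ → ℝ) (τ : ℝ) (hτ : 0 < τ)
    (hρconv : ConvexOn ℝ Set.univ ρ) (hρsmooth : ContDiff ℝ 2 ρ)
    (hρnonneg : ∀ x, 0 ≤ ρ x) (hρzero : ρ 0 = 0)
    (X : Fin n → EuclideanSpace ℝ (Fin p)) (ε : Fin n → ℝ) (i : Fin n)
    (βhat βi : EuclideanSpace ℝ (Fin p))
    (hβhat : fgrad ρ τ X ε βhat = 0)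
    (hβi : fgradLOO ρ τ X ε i βi = 0) :
    |resid X ε βi i - resid X ε βhat i| ≤
      (‖X i‖ ^ 2 / (n : ℝ)) * (1 / τ) * |deriv ρ (resid X ε βi i)| ∧
    |resid X ε βhat i| ≤ |resid X ε βi i| +
      (‖X i‖ ^ 2 / (n : ℝ)) * (1 / τ) * |deriv ρ (resid X ε βi i)| := by
  have hn : 0 < (n : ℝ) := by exact_mod_cast i.pos
  have hdiff : Differentiable ℝ ρ := hρsmooth.differentiable (by norm_num)
  have hmono : Monotone (deriv ρ) := by
    have h := hρconv.monotoneOn_deriv (fun x _ => hdiff.differentiableAt)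
    exact fun a b hab => h (Set.mem_univ a) (Set.mem_univ b) hab
  set ψ := deriv ρ with hψ
  set R : Fin n → ℝ := resid X ε βhat with hR
  set r : Fin n → ℝ := resid X ε βi with hr
  set d : EuclideanSpace ℝ (Fin p) := βhat - βi with hd
  have hip : ∀ j : Fin n, ⟪X j, d⟫ = r j - R j := by
    intro j
    simp only [hd, hR, hr, resid, inner_sub_right, PiLp.inner_apply,
      RCLike.inner_apply, conj_trivial]
    rw [Finset.sum_congr rfl (fun x _ => mul_comm (βhat.ofLp x) ((X j).ofLp x)),
      Finset.sum_congr rfl (fun x _ => mul_comm (βi.ofLp x) ((X j).ofLp x))]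
    ring
  -- the vector equation
  have hveq : τ • d = (1 / (n : ℝ)) •
      ((∑ j, ψ (R j) • X j) - ∑ j ∈ Finset.univ.erase i, ψ (r j) • X j) := by
    have h1 : τ • βhat = (1 / (n : ℝ)) • ∑ j, ψ (R j) • X j := by
      have := hβhat; rw [fgrad, sub_eq_zero] at this; exact this
    have h2 : τ • βi = (1 / (n : ℝ)) • ∑ j ∈ Finset.univ.erase i, ψ (r j) • X j := by
      have := hβi; rw [fgradLOO, sub_eq_zero] at this; exact this
    rw [hd, smul_sub, h1, h2, smul_sub]
  -- scalar equation
  have hscal : τ * ‖d‖ ^ 2 = (1 / (n : ℝ)) *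
      ((∑ j, ψ (R j) * (r j - R j)) -
        ∑ j ∈ Finset.univ.erase i, ψ (r j) * (r j - R j)) := by
    have := congrArg (fun v => ⟪v, d⟫) hveq
    simp only [inner_smul_left, inner_sub_left, sum_inner, RCLike.inner_apply,
      conj_trivial, real_inner_smul_left] at this
    rw [real_inner_self_eq_norm_sq] at this
    simp only [hip] at this
    rw [this]
  -- bound the sum
  have hbound : τ * ‖d‖ ^ 2 ≤ (1 / (n : ℝ)) * (ψ (r i) * (r i - R i)) := by
    rw [hscal]
    have hsplit : (∑ j, ψ (R j) * (r j - R j)) =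
        (∑ j ∈ Finset.univ.erase i, ψ (R j) * (r j - R j)) + ψ (R i) * (r i - R i) := by
      rw [← Finset.sum_erase_add _ _ (Finset.mem_univ i)]
    rw [hsplit]
    have key : ∀ a b : ℝ, (ψ a - ψ b) * (b - a) ≤ 0 := by
      intro a b
      rcases le_total a b with h | h
      · have := hmono h
        nlinarith
      · have := hmono h
        nlinarith
    have h1 : (∑ j ∈ Finset.univ.erase i, ψ (R j) * (r j - R j)) -
        ∑ j ∈ Finset.univ.erase i, ψ (r j) * (r j - R j) ≤ 0 := by
      rw [← Finset.sum_sub_distrib]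
      apply Finset.sum_nonpos
      intro j _
      have := key (R j) (r j)
      nlinarith [key (R j) (r j)]
    have h2 : ψ (R i) * (r i - R i) ≤ ψ (r i) * (r i - R i) := by
      nlinarith [key (R i) (r i)]
    have hninv : 0 < 1 / (n : ℝ) := by positivity
    nlinarith [mul_le_mul_of_nonneg_left (add_le_add h1 h2) hninv.le]
  -- Cauchy-Schwarz
  have hcs : |r i - R i| ≤ ‖X i‖ * ‖d‖ := by
    rw [← hip i]
    exact abs_real_inner_le_norm (X i) d
  have habs : ψ (r i) * (r i - R i) ≤ |ψ (r i)| * |r i - R i| := by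
    calc ψ (r i) * (r i - R i) ≤ |ψ (r i) * (r i - R i)| := le_abs_self _
      _ = |ψ (r i)| * |r i - R i| := abs_mul _ _
  set a := |r i - R i| with ha
  set M := ‖X i‖ with hM
  set D := ‖d‖ with hD
  set P := |ψ (r i)| with hP
  have haP : 0 ≤ P := abs_nonneg _
  have haa : 0 ≤ a := abs_nonneg _
  have haM : 0 ≤ M := norm_nonneg _
  have haD : 0 ≤ D := norm_nonneg _
  have h3 : τ * D ^ 2 ≤ (1 / (n : ℝ)) * (P * a) := by
    calc τ * D ^ 2 ≤ (1 / (n : ℝ)) * (ψ (r i) * (r i - R i)) := hbound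
      _ ≤ (1 / (n : ℝ)) * (P * a) := by
          apply mul_le_mul_of_nonneg_left habs (by positivity)
  clear_value a M D P
  have hmain : a ≤ M ^ 2 / (n : ℝ) * (1 / τ) * P := by
    have h4 : a ^ 2 ≤ M ^ 2 * D ^ 2 := by nlinarith
    have h3' : (n : ℝ) * (τ * D ^ 2) ≤ P * a := by
      have h := mul_le_mul_of_nonneg_left h3 hn.le
      have : (n : ℝ) * ((1 / (n : ℝ)) * (P * a)) = P * a := by field_simp
      linarith [h, this.le, this.ge]
    have h5 : (n : ℝ) * τ * a ^ 2 ≤ M ^ 2 * (P * a) := by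
      nlinarith [mul_le_mul_of_nonneg_left h3' (sq_nonneg M),
        mul_le_mul_of_nonneg_left h4 (by positivity : (0:ℝ) ≤ (n : ℝ) * τ)]
    rcases eq_or_lt_of_le haa with h | h
    · rw [← h]; positivity
    · rw [show M ^ 2 / (n : ℝ) * (1 / τ) * P = M ^ 2 * P / ((n : ℝ) * τ) by
        rw [eq_div_iff (by positivity)]; field_simp]
      rw [le_div_iff₀ (by positivity)]
      nlinarith
  constructor
  · exact hmain
  · have : |R i| ≤ |r i| + a := by
      have : R i = r i - (r i - R i) := by ring
      rw [this]
      exact (abs_sub _ _).trans_eq (by rw [ha])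
    linarith
end
end
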